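/- Suppose X is at most countable and [x] = c·x + O(x^α) for some constant c > 0 and some α ∈ [0, 1). Then for every K ∈ I_X and every complex s with Re(s) > 1, Σ_{M ∈ I_X} C_K(M)/N(M)^s = Z(s)·φ_{1−s}(K), where Z(s) = Σ_{A ∈ I_X} N(A)^{−s} and φ_w(K) = Σ_{D ∈ I_X, D ≤ K} μ(K − D)·N(D)^w. -/

import Mathlib

open Finset Filter Topology Asymptotics
open scoped Classical

/-- The Möbius function on `I_X = X →₀ ℕ`: `μ A = (-1)^(∑ₓ A x)` if `A x ≤ 1`
for every `x`, and `0` otherwise. -/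
noncomputable def mob {X : Type*} (A : X →₀ ℕ) : ℤ :=
  if ∀ x, A x ≤ 1 then (-1) ^ (A.sum fun _ n => n) else 0

/-- The generalized Ramanujan sum `C_K(M) = ∑_{D ≤ M, D ≤ K} N(D)·μ(K − D)`. -/
noncomputable def ram {X : Type*} [DecidableEq X] (Nrm : (X →₀ ℕ) → ℤ)
    (K M : X →₀ ℕ) : ℤ :=
  ∑ D ∈ Finset.Iic (M ⊓ K), Nrm D * mob (K - D)

/-- For `Re s > 1`, `∑_M C_K(M)/N(M)^s = Z(s)·φ_{1−s}(K)`, where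
`Z(s) = ∑_A N(A)^{−s}` and `φ_w(K) = ∑_{D ≤ K} μ(K − D)·N(D)^w`. -/
theorem tsum_ram_div_norm_cpow {X : Type*} [Nonempty X] [Countable X] [DecidableEq X]
    (Nrm : (X →₀ ℕ) → ℤ)
    (hge : ∀ A, 1 ≤ Nrm A) (h0 : Nrm 0 = 1) (hgt : ∀ A, A ≠ 0 → 1 < Nrm A)
    (hmul : ∀ A B, Nrm (A + B) = Nrm A * Nrm B)
    (c α : ℝ) (hc : 0 < c) (hα0 : 0 ≤ α) (hα1 : α < 1)
    (hfin : ∀ x : ℝ, {A : X →₀ ℕ | (Nrm A : ℝ) ≤ x}.Finite)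
    (hcount : (fun x : ℝ => (((hfin x).toFinset.card : ℝ) - c * x))
      =O[atTop] fun x : ℝ => x ^ α)
    (K : X →₀ ℕ) (s : ℂ) (hs : 1 < s.re) :
    ∑' M : X →₀ ℕ, (ram Nrm K M : ℂ) / (Nrm M : ℂ) ^ s
      = (∑' A : X →₀ ℕ, (Nrm A : ℂ) ^ (-s))
          * ∑ D ∈ Finset.Iic K, (mob (K - D) : ℂ) * (Nrm D : ℂ) ^ (1 - s) := by
  have hposZ : ∀ A : X →₀ ℕ, (0 : ℤ) < Nrm A := fun A => lt_of_lt_of_le one_pos (hge A)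
  have hpos : ∀ A : X →₀ ℕ, (0 : ℝ) < (Nrm A : ℝ) := fun A => by exact_mod_cast hposZ A
  have h1le : ∀ A : X →₀ ℕ, (1 : ℝ) ≤ (Nrm A : ℝ) := fun A => by exact_mod_cast hge A
  have hne : ∀ A : X →₀ ℕ, (Nrm A : ℂ) ≠ 0 := fun A => by
    exact_mod_cast Int.cast_ne_zero.mpr (hposZ A).ne'
  set σ : ℝ := s.re with hσdef
  -- Step 1: a linear bound on the counting function
  obtain ⟨C₀, hC₀pos, hC₀⟩ := hcount.exists_pos
  rw [Asymptotics.isBigOWith_iff] at hC₀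
  obtain ⟨x₀, hx₀⟩ := Filter.eventually_atTop.1 hC₀
  set x₁ : ℝ := max x₀ 1 with hx₁def
  set C : ℝ := c + C₀ + ((hfin x₁).toFinset.card : ℝ) + 1 with hCdef
  have hCpos : 0 < C := by positivity
  have hCb : ∀ x : ℝ, 1 ≤ x → (((hfin x).toFinset.card : ℝ)) ≤ C * x := by
    intro x hx
    by_cases hx' : x₁ ≤ x
    · have hb := hx₀ x (le_trans (le_max_left _ _) hx')
      have hxpos : (0:ℝ) < x := lt_of_lt_of_le one_pos hx
      have hxa : x ^ α ≤ x := by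
        calc x ^ α ≤ x ^ (1:ℝ) := Real.rpow_le_rpow_of_exponent_le hx hα1.le
        _ = x := Real.rpow_one x
      have hxanorm : ‖x ^ α‖ = x ^ α := Real.norm_of_nonneg (Real.rpow_nonneg hxpos.le _)
      rw [Real.norm_eq_abs] at hb
      have h1 : ((hfin x).toFinset.card : ℝ) - c * x ≤ C₀ * (x ^ α) := by
        rw [hxanorm] at hb
        have := abs_le.mp hb
        linarith [this.2]
      have h2 : C₀ * x ^ α ≤ C₀ * x := mul_le_mul_of_nonneg_left hxa hC₀pos.le
      have hcard0 : (0:ℝ) ≤ ((hfin x₁).toFinset.card : ℝ) := Nat.cast_nonneg _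
      nlinarith
    · push_neg at hx'
      have hsub : (hfin x).toFinset ⊆ (hfin x₁).toFinset := by
        rw [Set.Finite.toFinset_subset_toFinset]
        exact fun A hA => le_trans hA hx'.le
      have h1 : ((hfin x).toFinset.card : ℝ) ≤ ((hfin x₁).toFinset.card : ℝ) := by
        exact_mod_cast Finset.card_le_card hsub
      have h2 : ((hfin x₁).toFinset.card : ℝ) ≤ C := by
        have : (0:ℝ) ≤ c + C₀ := by positivity
        simp only [hCdef]; linarith
      calc ((hfin x).toFinset.card : ℝ) ≤ C := le_trans h1 h2
      _ = C * 1 := (mul_one C).symm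
      _ ≤ C * x := mul_le_mul_of_nonneg_left hx hCpos.le
  -- Step 2: summability of the Dirichlet series
  have hσ1 : 1 < σ := hs
  set r : ℝ := (2:ℝ) ^ (1 - σ) with hrdef
  have hr0 : 0 ≤ r := Real.rpow_nonneg (by norm_num) _
  have hr1 : r < 1 := Real.rpow_lt_one_of_one_lt_of_neg (by norm_num) (by linarith)
  have hgeo : Summable (fun k : ℕ => r ^ k) := summable_geometric_of_lt_one hr0 hr1
  have hRsum : Summable (fun A : X →₀ ℕ => (Nrm A : ℝ) ^ (-σ)) := by
    apply summable_of_sum_le (c := 2 * C * (1 - r)⁻¹)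
    · intro A
      exact Real.rpow_nonneg (hpos A).le _
    · intro u
      set g : (X →₀ ℕ) → ℕ := fun A => Nat.log 2 (Nrm A).toNat with hgdef
      have hmaps : ∀ A ∈ u, g A ∈ Finset.range (u.sup g + 1) := fun A hA =>
        Finset.mem_range.2 (Nat.lt_succ_of_le (Finset.le_sup hA))
      rw [← Finset.sum_fiberwise_of_maps_to hmaps]
      have key : ∀ k ∈ Finset.range (u.sup g + 1),
          ∑ A ∈ u.filter (fun A => g A = k), (Nrm A : ℝ) ^ (-σ) ≤ (2 * C) * r ^ k := by
        intro k _
        have hblock : ∀ A ∈ u.filter (fun A => g A = k),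
            (Nrm A : ℝ) ^ (-σ) ≤ ((2:ℝ) ^ k) ^ (-σ) := by
          intro A hA
          have hk : Nat.log 2 (Nrm A).toNat = k := (Finset.mem_filter.1 hA).2
          have htn : (2:ℕ) ^ k ≤ (Nrm A).toNat := by
            rw [← hk]
            exact Nat.pow_log_le_self 2 (by have := hposZ A; omega)
          have hcast : ((Nrm A).toNat : ℝ) = (Nrm A : ℝ) := by
            exact_mod_cast Int.toNat_of_nonneg (hposZ A).le
          have hle : (2:ℝ) ^ k ≤ (Nrm A : ℝ) := by
            rw [← hcast]; exact_mod_cast htn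
          exact Real.rpow_le_rpow_of_nonpos (by positivity) hle (by linarith)
        have hcardle : ((u.filter (fun A => g A = k)).card : ℝ) ≤ C * 2 ^ (k + 1) := by
          have hsub : u.filter (fun A => g A = k) ⊆ (hfin ((2:ℝ) ^ (k + 1))).toFinset := by
            intro A hA
            have hk : Nat.log 2 (Nrm A).toNat = k := (Finset.mem_filter.1 hA).2
            have htn : (Nrm A).toNat < 2 ^ (k + 1) := by
              rw [← hk]
              exact Nat.lt_pow_succ_log_self (by norm_num) _
            have hcast : ((Nrm A).toNat : ℝ) = (Nrm A : ℝ) := by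
              exact_mod_cast Int.toNat_of_nonneg (hposZ A).le
            rw [Set.Finite.mem_toFinset]
            show (Nrm A : ℝ) ≤ (2:ℝ) ^ (k + 1)
            rw [← hcast]
            exact_mod_cast htn.le
          calc ((u.filter (fun A => g A = k)).card : ℝ)
              ≤ (((hfin ((2:ℝ) ^ (k + 1))).toFinset.card : ℝ)) := by
                exact_mod_cast Finset.card_le_card hsub
          _ ≤ C * 2 ^ (k + 1) := hCb _ (one_le_pow₀ (by norm_num))
        have hbnd0 : (0:ℝ) ≤ ((2:ℝ) ^ k) ^ (-σ) := Real.rpow_nonneg (by positivity) _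
        calc ∑ A ∈ u.filter (fun A => g A = k), (Nrm A : ℝ) ^ (-σ)
            ≤ ∑ _A ∈ u.filter (fun A => g A = k), ((2:ℝ) ^ k) ^ (-σ) :=
              Finset.sum_le_sum hblock
        _ = ((u.filter (fun A => g A = k)).card : ℝ) * ((2:ℝ) ^ k) ^ (-σ) := by
              rw [Finset.sum_const, nsmul_eq_mul]
        _ ≤ (C * 2 ^ (k + 1)) * ((2:ℝ) ^ k) ^ (-σ) :=
              mul_le_mul_of_nonneg_right hcardle hbnd0
        _ = (2 * C) * r ^ k := by
              rw [hrdef]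
              rw [← Real.rpow_natCast (2:ℝ) k, ← Real.rpow_natCast ((2:ℝ) ^ (1 - σ)) k,
                ← Real.rpow_natCast (2:ℝ) (k + 1),
                ← Real.rpow_mul (by norm_num : (0:ℝ) ≤ 2),
                ← Real.rpow_mul (by norm_num : (0:ℝ) ≤ 2)]
              push_cast
              rw [show (1 - σ) * (k:ℝ) = (k:ℝ) + (k:ℝ) * (-σ) by ring,
                Real.rpow_add (by norm_num : (0:ℝ) < 2),
                Real.rpow_add (by norm_num : (0:ℝ) < 2), Real.rpow_one]
              ring
      calc ∑ k ∈ Finset.range (u.sup g + 1), ∑ A ∈ u.filter (fun A => g A = k),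
              (Nrm A : ℝ) ^ (-σ)
          ≤ ∑ k ∈ Finset.range (u.sup g + 1), (2 * C) * r ^ k := Finset.sum_le_sum key
      _ = (2 * C) * ∑ k ∈ Finset.range (u.sup g + 1), r ^ k := by rw [Finset.mul_sum]
      _ ≤ (2 * C) * (1 - r)⁻¹ := by
          apply mul_le_mul_of_nonneg_left _ (by positivity)
          calc ∑ k ∈ Finset.range (u.sup g + 1), r ^ k
              ≤ ∑' k : ℕ, r ^ k := Summable.sum_le_tsum _ (fun k _ => pow_nonneg hr0 k) hgeo
          _ = (1 - r)⁻¹ := tsum_geometric_of_lt_one hr0 hr1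
  have hnorm : ∀ A : X →₀ ℕ, ‖(Nrm A : ℂ) ^ (-s)‖ = (Nrm A : ℝ) ^ (-σ) := by
    intro A
    have : ((Nrm A : ℝ) : ℂ) = (Nrm A : ℂ) := by push_cast; ring
    rw [← this, Complex.norm_cpow_eq_rpow_re_of_pos (hpos A)]
    simp [hσdef]
  have hZ : Summable (fun A : X →₀ ℕ => (Nrm A : ℂ) ^ (-s)) := by
    apply Summable.of_norm
    simpa only [hnorm] using hRsum
  set Z : ℂ := ∑' A : X →₀ ℕ, (Nrm A : ℂ) ^ (-s) with hZdef
  -- Step 3: rewrite each term of the series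
  have hram : ∀ M : X →₀ ℕ, (ram Nrm K M : ℂ) / (Nrm M : ℂ) ^ s
      = ∑ D ∈ Finset.Iic K,
          (if D ≤ M then ((Nrm D : ℂ) * (mob (K - D) : ℂ)) * (Nrm M : ℂ) ^ (-s) else 0) := by
    intro M
    have h1 : Finset.Iic (M ⊓ K) = (Finset.Iic K).filter (fun D => D ≤ M) := by
      ext D
      simp [le_inf_iff, and_comm]
    rw [ram, h1, Finset.sum_filter]
    push_cast
    rw [Finset.sum_div]
    refine Finset.sum_congr rfl fun D _ => ?_
    split_ifs with h
    · rw [div_eq_mul_inv, ← Complex.cpow_neg]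
    · exact zero_div _
  -- summability of each summand family
  have hFsummable : ∀ D : X →₀ ℕ, Summable (fun M : X →₀ ℕ =>
      (if D ≤ M then ((Nrm D : ℂ) * (mob (K - D) : ℂ)) * (Nrm M : ℂ) ^ (-s) else 0)) := by
    intro D
    have heq : (fun M : X →₀ ℕ =>
        (if D ≤ M then ((Nrm D : ℂ) * (mob (K - D) : ℂ)) * (Nrm M : ℂ) ^ (-s) else 0))
        = Set.indicator {M : X →₀ ℕ | D ≤ M}
            (fun M => ((Nrm D : ℂ) * (mob (K - D) : ℂ)) * (Nrm M : ℂ) ^ (-s)) := by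
      funext M
      simp [Set.indicator_apply]
    rw [heq]
    exact (hZ.mul_left _).indicator _
  -- Step 4: compute the inner sums
  have hinner : ∀ D ∈ Finset.Iic K, (∑' M : X →₀ ℕ,
      (if D ≤ M then ((Nrm D : ℂ) * (mob (K - D) : ℂ)) * (Nrm M : ℂ) ^ (-s) else 0))
      = ((Nrm D : ℂ) * (mob (K - D) : ℂ)) * ((Nrm D : ℂ) ^ (-s) * Z) := by
    intro D _
    have hinj : Function.Injective (fun A : X →₀ ℕ => D + A) :=
      fun a b h => by simpa using h
    have hsupp : Function.support (fun M : X →₀ ℕ =>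
        (if D ≤ M then ((Nrm D : ℂ) * (mob (K - D) : ℂ)) * (Nrm M : ℂ) ^ (-s) else 0))
        ⊆ Set.range (fun A : X →₀ ℕ => D + A) := by
      intro M hM
      by_cases h : D ≤ M
      · obtain ⟨A, hA⟩ := le_iff_exists_add.mp h
        exact ⟨A, hA.symm⟩
      · simp [h] at hM
    rw [← hinj.tsum_eq hsupp]
    have hterm : ∀ A : X →₀ ℕ,
        (if D ≤ D + A then ((Nrm D : ℂ) * (mob (K - D) : ℂ)) * (Nrm (D + A) : ℂ) ^ (-s) else 0)
        = ((Nrm D : ℂ) * (mob (K - D) : ℂ)) * ((Nrm D : ℂ) ^ (-s) * (Nrm A : ℂ) ^ (-s)) := by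
      intro A
      rw [if_pos (self_le_add_right D A)]
      congr 1
      have hcast : (Nrm (D + A) : ℂ) = ((Nrm D : ℝ) : ℂ) * ((Nrm A : ℝ) : ℂ) := by
        rw [hmul]; push_cast; ring
      rw [hcast, Complex.mul_cpow_ofReal_nonneg (hpos D).le (hpos A).le]
      push_cast
      ring
    calc (∑' A : X →₀ ℕ, (if D ≤ D + A then
            ((Nrm D : ℂ) * (mob (K - D) : ℂ)) * (Nrm (D + A) : ℂ) ^ (-s) else 0))
        = ∑' A : X →₀ ℕ, ((Nrm D : ℂ) * (mob (K - D) : ℂ)) * (Nrm D : ℂ) ^ (-s)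
            * (Nrm A : ℂ) ^ (-s) := by
          refine tsum_congr fun A => ?_
          rw [hterm A]; ring
    _ = ((Nrm D : ℂ) * (mob (K - D) : ℂ)) * (Nrm D : ℂ) ^ (-s) * Z := tsum_mul_left
    _ = ((Nrm D : ℂ) * (mob (K - D) : ℂ)) * ((Nrm D : ℂ) ^ (-s) * Z) := by ring
  -- Step 5: put everything together
  calc ∑' M : X →₀ ℕ, (ram Nrm K M : ℂ) / (Nrm M : ℂ) ^ s
      = ∑' M : X →₀ ℕ, ∑ D ∈ Finset.Iic K,
          (if D ≤ M then ((Nrm D : ℂ) * (mob (K - D) : ℂ)) * (Nrm M : ℂ) ^ (-s) else 0) :=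
        tsum_congr hram
  _ = ∑ D ∈ Finset.Iic K, ∑' M : X →₀ ℕ,
          (if D ≤ M then ((Nrm D : ℂ) * (mob (K - D) : ℂ)) * (Nrm M : ℂ) ^ (-s) else 0) :=
        Summable.tsum_finsetSum (fun D _ => hFsummable D)
  _ = ∑ D ∈ Finset.Iic K,
          ((Nrm D : ℂ) * (mob (K - D) : ℂ)) * ((Nrm D : ℂ) ^ (-s) * Z) :=
        Finset.sum_congr rfl hinner
  _ = Z * ∑ D ∈ Finset.Iic K, (mob (K - D) : ℂ) * (Nrm D : ℂ) ^ (1 - s) := by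
        rw [Finset.mul_sum]
        refine Finset.sum_congr rfl fun D _ => ?_
        have h1s : (Nrm D : ℂ) ^ (1 - s) = (Nrm D : ℂ) * (Nrm D : ℂ) ^ (-s) := by
          rw [sub_eq_add_neg, Complex.cpow_add _ _ (hne D), Complex.cpow_one]
        rw [h1s]
        ring
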